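/- Let p > 3 be prime and write s = 1 + n(p-1)p^t with t ≥ 0 and n ≥ 0. Then for all i ≥ 2 with i ≤ t+2, Σ_{0≤j≤s, j≡1 mod (p-1)} C(j,i)·C(s,j) ≡ 0 (mod p^{t+2-i}). -/

import Mathlib

lemma pow_ge_add_two (p : ℕ) (hp : 5 ≤ p) : ∀ v : ℕ, 1 ≤ v → v + 2 ≤ p ^ v := by
  intro v hv
  induction v with
  | zero => omega
  | succ w ih =>
    rcases Nat.eq_or_lt_of_le hv with h | h
    · simp [← h]; omega
    · have hw : 1 ≤ w := by omega
      have := ih hw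
      have h2 : p ^ (w + 1) = p * p ^ w := by ring
      have hpw : 1 ≤ p ^ w := Nat.one_le_pow _ _ (by omega)
      nlinarith

lemma key_dvd (p n t s i : ℕ) (hp : p.Prime) (hp3 : 3 < p)
    (hs : s = 1 + n * (p - 1) * p ^ t) (hi2 : 2 ≤ i) (hit : i ≤ t + 2) :
    p ^ (t + 2 - i) ∣ s.choose i := by
  by_cases hsi : s < i
  · simp [Nat.choose_eq_zero_of_lt hsi]
  push_neg at hsi
  by_cases hti : t + 2 ≤ i
  · have : t + 2 - i = 0 := by omega
    simp [this]
  -- now i ≤ t + 1, i ≤ s, 2 ≤ i, so s ≥ 2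
  have hs2 : 2 ≤ s := le_trans hi2 hsi
  -- identity: s.choose i * i * (i-1) = s * (s-1) * (s-2).choose (i-2)
  have hid : s.choose i * (i * (i - 1)) = s * (s - 1) * (s - 2).choose (i - 2) := by
    have h1 := Nat.add_one_mul_choose_eq (s - 1) (i - 1)
    have h2 := Nat.add_one_mul_choose_eq (s - 2) (i - 2)
    have e1 : s - 1 + 1 = s := by omega
    have e2 : i - 1 + 1 = i := by omega
    have e3 : s - 2 + 1 = s - 1 := by omega
    have e4 : i - 2 + 1 = i - 1 := by omega
    rw [e1, e2] at h1
    rw [e3, e4] at h2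
    calc s.choose i * (i * (i - 1)) = s.choose i * i * (i - 1) := by ring
    _ = s * (s - 1).choose (i - 1) * (i - 1) := by rw [← h1]
    _ = s * ((s - 1).choose (i - 1) * (i - 1)) := by ring
    _ = s * ((s - 1) * (s - 2).choose (i - 2)) := by rw [← h2]
    _ = s * (s - 1) * (s - 2).choose (i - 2) := by ring
  have hpt : p ^ t ∣ s.choose i * (i * (i - 1)) := by
    rw [hid]
    have : s - 1 = n * (p - 1) * p ^ t := by omega
    exact Dvd.dvd.mul_right (Dvd.dvd.mul_left (this ▸ dvd_mul_left _ _) s) _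
  -- v := p-adic valuation of i*(i-1)
  obtain ⟨v, hvdef⟩ : ∃ v, (i * (i - 1)).factorization p = v := ⟨_, rfl⟩
  have hii : i * (i - 1) ≠ 0 := by
    have : 1 ≤ i - 1 := by omega
    positivity
  have hvsum : v = i.factorization p + (i - 1).factorization p := by
    rw [← hvdef, Nat.factorization_mul (by omega) (by omega)]; simp
  -- one of the two valuations is zero
  have hone : i.factorization p = 0 ∨ (i - 1).factorization p = 0 := by
    by_contra h
    push_neg at h
    have d1 : p ∣ i := Nat.dvd_of_factorization_pos (by omega)
    have d2 : p ∣ i - 1 := Nat.dvd_of_factorization_pos (by omega)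
    have : p ∣ i - (i - 1) := Nat.dvd_sub d1 d2
    have e : i - (i - 1) = 1 := by omega
    rw [e] at this
    have := Nat.le_of_dvd one_pos this
    omega
  have hpvle : p ^ v ≤ i := by
    rcases hone with h | h
    · have : v = (i - 1).factorization p := by omega
      rw [this]
      calc p ^ (i - 1).factorization p ≤ i - 1 :=
            Nat.le_of_dvd (by omega) (Nat.ordProj_dvd _ _)
        _ ≤ i := by omega
    · have : v = i.factorization p := by omega
      rw [this]
      exact Nat.le_of_dvd (by omega) (Nat.ordProj_dvd _ _)
  have hvi : v ≤ i - 2 := by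
    by_cases hv0 : v = 0
    · omega
    · have hp4 : p ≠ 4 := by
        intro h
        rw [h] at hp
        norm_num at hp
      have h5 : 5 ≤ p := by omega
      have := pow_ge_add_two p h5 v (by omega)
      omega
  -- write i*(i-1) = p^v * m with p ∤ m
  obtain ⟨m, hmdef⟩ : ∃ m, (i * (i - 1)) / p ^ ((i * (i - 1)).factorization p) = m := ⟨_, rfl⟩
  have hsplit : i * (i - 1) = p ^ v * m := by
    rw [← hvdef, ← hmdef]
    exact (Nat.ordProj_mul_ordCompl_eq_self _ p).symm
  have hpm : ¬ p ∣ m := hmdef ▸ Nat.not_dvd_ordCompl hp hii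
  have hvt : v ≤ t := le_trans hvi (by omega)
  have hcancel : p ^ (t - v) ∣ s.choose i * m := by
    have h1 : p ^ v * p ^ (t - v) ∣ p ^ v * (s.choose i * m) := by
      rw [← pow_add]
      have : v + (t - v) = t := by omega
      rw [this]
      calc p ^ t ∣ s.choose i * (i * (i - 1)) := hpt
        _ = p ^ v * (s.choose i * m) := by rw [hsplit]; ring
    exact (mul_dvd_mul_iff_left (pow_ne_zero v hp.pos.ne')).mp h1
  have hcop : Nat.Coprime (p ^ (t - v)) m :=
    Nat.Coprime.pow_left _ ((Nat.Prime.coprime_iff_not_dvd hp).mpr hpm)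
  have hdvd : p ^ (t - v) ∣ s.choose i := (Nat.Coprime.dvd_of_dvd_mul_right hcop) hcancel
  exact dvd_trans (pow_dvd_pow p (by omega)) hdvd

theorem stmt_13 (p n t s : ℕ) (hp : p.Prime) (hp3 : 3 < p)
    (hs : s = 1 + n * (p - 1) * p^t) :
    ∀ i : ℕ, 2 ≤ i → i ≤ t + 2 →
      (p : ℤ)^(t + 2 - i) ∣ ∑ j ∈ (Finset.range (s + 1)).filter
        (fun j => j % (p - 1) = 1 % (p - 1)), (j.choose i : ℤ) * (s.choose j : ℤ) := by
  intro i hi2 hit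
  have key := key_dvd p n t s i hp hp3 hs hi2 hit
  apply Finset.dvd_sum
  intro j hj
  rcases lt_or_ge j i with h | h
  · simp [Nat.choose_eq_zero_of_lt h]
  · have hjs : j ≤ s := by
      have h1 := (Finset.mem_filter.mp hj).1
      have := Finset.mem_range.mp h1
      omega
    have hid : s.choose j * j.choose i = s.choose i * (s - i).choose (j - i) :=
      Nat.choose_mul h
    have hid' : (j.choose i : ℤ) * (s.choose j : ℤ) = (s.choose i : ℤ) * ((s - i).choose (j - i) : ℤ) := by
      rw [mul_comm]
      exact_mod_cast congrArg (Nat.cast : ℕ → ℤ) hid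
    rw [hid']
    have hc : (p : ℤ) ^ (t + 2 - i) ∣ (s.choose i : ℤ) := by exact_mod_cast key
    exact hc.mul_right _
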